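/- Let M be a cancellative commutative monoid with only trivial units and let F be a functor from MOPetri to BM. Then for any endomorphism mope net N (with equal domain and codomain X) and any finite set K, F(N ⊕ id_K) = F(N). -/

import Mathlib

/-- An open Petri net: a cospan of finite sets `X → S ← Y` decorated by a
Petri net with (finite) species set `S` and (finite) transition set `T`;
`src τ` and `tgt τ` are the input and output multisets of the transition `τ`. -/
structure OpenPetri (X Y : Type) where
  S : Type
  finS : Finite S
  i : X → S
  o : Y → S
  T : Type
  finT : Finite T
  src : T → S → ℕ
  tgt : T → S → ℕ

namespace OpenPetri

/-- The transitionless open Petri net on a cospan `X → S ← Y`. -/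
def trNet {X Y : Type} (S : Type) (hS : Finite S) (i : X → S) (o : Y → S) :
    OpenPetri X Y :=
  ⟨S, hS, i, o, PEmpty, inferInstance, fun t => t.elim, fun t => t.elim⟩

/-- The identity open Petri net on a finite set `S`. -/
def idNet (S : Type) (hS : Finite S) : OpenPetri S S := trNet S hS id id

/-- The relation generating the pushout of `S ← Y → S'`. -/
def pushoutRel {Y S S' : Type} (o : Y → S) (i' : Y → S') :
    (S ⊕ S') → (S ⊕ S') → Prop :=
  fun a b => ∃ y, a = Sum.inl (o y) ∧ b = Sum.inr (i' y)

/-- Composition of open Petri nets: pushout of the underlying cospans,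
disjoint union of transitions, and source/target multisets pushed forward
along the pushout maps. -/
noncomputable def comp {X Y Z : Type} (P : OpenPetri X Y) (Q : OpenPetri Y Z) :
    OpenPetri X Z where
  S := Quot (pushoutRel P.o Q.i)
  finS := by have := P.finS; have := Q.finS; exact Quot.finite _
  i := fun x => Quot.mk _ (Sum.inl (P.i x))
  o := fun z => Quot.mk _ (Sum.inr (Q.o z))
  T := P.T ⊕ Q.T
  finT := by have := P.finT; have := Q.finT; infer_instance
  src := fun τ σ' =>
    match τ with
    | Sum.inl τ => ∑ᶠ (σ : P.S) (_ : Quot.mk (pushoutRel P.o Q.i) (Sum.inl σ) = σ'), P.src τ σ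
    | Sum.inr τ => ∑ᶠ (σ : Q.S) (_ : Quot.mk (pushoutRel P.o Q.i) (Sum.inr σ) = σ'), Q.src τ σ
  tgt := fun τ σ' =>
    match τ with
    | Sum.inl τ => ∑ᶠ (σ : P.S) (_ : Quot.mk (pushoutRel P.o Q.i) (Sum.inl σ) = σ'), P.tgt τ σ
    | Sum.inr τ => ∑ᶠ (σ : Q.S) (_ : Quot.mk (pushoutRel P.o Q.i) (Sum.inr σ) = σ'), Q.tgt τ σ

/-- Tensor (disjoint union) of open Petri nets. -/
def tensor {X Y X' Y' : Type} (P : OpenPetri X Y) (Q : OpenPetri X' Y') :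
    OpenPetri (X ⊕ X') (Y ⊕ Y') where
  S := P.S ⊕ Q.S
  finS := by have := P.finS; have := Q.finS; infer_instance
  i := Sum.map P.i Q.i
  o := Sum.map P.o Q.o
  T := P.T ⊕ Q.T
  finT := by have := P.finT; have := Q.finT; infer_instance
  src := fun τ σ =>
    match τ, σ with
    | Sum.inl τ, Sum.inl σ => P.src τ σ
    | Sum.inr τ, Sum.inr σ => Q.src τ σ
    | _, _ => 0
  tgt := fun τ σ =>
    match τ, σ with
    | Sum.inl τ, Sum.inl σ => P.tgt τ σ
    | Sum.inr τ, Sum.inr σ => Q.tgt τ σ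
    | _, _ => 0

/-- Isomorphism of open Petri nets with the same feet: bijections of species
and transitions commuting with the legs and the source/target maps. -/
structure Iso {X Y : Type} (P Q : OpenPetri X Y) where
  eS : P.S ≃ Q.S
  eT : P.T ≃ Q.T
  hi : ∀ x, eS (P.i x) = Q.i x
  ho : ∀ y, eS (P.o y) = Q.o y
  hsrc : ∀ τ σ, Q.src (eT τ) (eS σ) = P.src τ σ
  htgt : ∀ τ σ, Q.tgt (eT τ) (eS σ) = P.tgt τ σ

/-- A monically open ("mope") Petri net: both legs are injective. -/
def Monic {X Y : Type} (P : OpenPetri X Y) : Prop :=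
  Function.Injective P.i ∧ Function.Injective P.o

end OpenPetri

namespace Stmt19Aux

open OpenPetri
open scoped Classical

lemma sum_if_inj {A B : Type} [Finite A] {g : A → B} (hg : Function.Injective g)
    (f : A → ℕ) (a : A) {inst : ∀ σ, Decidable (g σ = g a)} :
    (∑ᶠ σ : A, @ite _ (g σ = g a) (inst σ) (f σ) 0) = f a := by
  rw [finsum_eq_single _ a (fun b hb => by rw [if_neg (fun h => hb (hg h))])]
  rw [if_pos rfl]

lemma sum_if_eq {A : Type} [Finite A] (f : A → ℕ) (a : A)
    {inst : ∀ σ : A, Decidable (σ = a)} :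
    (∑ᶠ σ : A, @ite _ (σ = a) (inst σ) (f σ) 0) = f a :=
  sum_if_inj Function.injective_id f a

lemma sum_if_zero {A B : Type} [Finite A] (g : A → B) (f : A → ℕ) {b : B}
    (hb : ∀ a, g a ≠ b) {inst : ∀ σ, Decidable (g σ = b)} :
    (∑ᶠ σ : A, @ite _ (g σ = b) (inst σ) (f σ) 0) = 0 :=
  finsum_eq_zero_of_forall_eq_zero fun a => by rw [if_neg (hb a)]

lemma sum_if_inl {A C : Type} [Finite A] (f : A → ℕ) (b : A ⊕ C)
    {inst : ∀ σ : A, Decidable ((Sum.inl σ : A ⊕ C) = b)} :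
    (∑ᶠ σ : A, @ite _ ((Sum.inl σ : A ⊕ C) = b) (inst σ) (f σ) 0) = Sum.elim f 0 b := by
  cases b with
  | inl a => exact sum_if_inj Sum.inl_injective f a
  | inr c => exact sum_if_zero _ f (fun a h => by simp at h)

/-- Generic construction of an isomorphism from a composite onto an explicit net. -/
noncomputable def compIso {X Y Z : Type} (P : OpenPetri X Y) (Q : OpenPetri Y Z)
    (E : OpenPetri X Z)
    (f : P.S ⊕ Q.S → E.S)
    (hf : ∀ a b, pushoutRel P.o Q.i a b → f a = f b)
    (inv : E.S → Quot (pushoutRel P.o Q.i))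
    (hinv₁ : ∀ a, inv (f a) = Quot.mk _ a)
    (hinv₂ : ∀ s, Quot.lift f hf (inv s) = s)
    (eT : (P.T ⊕ Q.T) ≃ E.T)
    (hi : ∀ x, f (Sum.inl (P.i x)) = E.i x)
    (ho : ∀ z, f (Sum.inr (Q.o z)) = E.o z)
    (hsP : ∀ τ a, E.src (eT (Sum.inl τ)) (f a)
      = ∑ᶠ σ : P.S, if f (Sum.inl σ) = f a then P.src τ σ else 0)
    (hsQ : ∀ τ a, E.src (eT (Sum.inr τ)) (f a)
      = ∑ᶠ σ : Q.S, if f (Sum.inr σ) = f a then Q.src τ σ else 0)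
    (htP : ∀ τ a, E.tgt (eT (Sum.inl τ)) (f a)
      = ∑ᶠ σ : P.S, if f (Sum.inl σ) = f a then P.tgt τ σ else 0)
    (htQ : ∀ τ a, E.tgt (eT (Sum.inr τ)) (f a)
      = ∑ᶠ σ : Q.S, if f (Sum.inr σ) = f a then Q.tgt τ σ else 0) :
    Iso (P.comp Q) E := by
  have key : ∀ (x a : P.S ⊕ Q.S),
      (Quot.mk (pushoutRel P.o Q.i) x = Quot.mk (pushoutRel P.o Q.i) a) = (f x = f a) := by
    intro x a
    apply propext
    constructor
    · exact fun h => congrArg (Quot.lift f hf) h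
    · intro h
      rw [← hinv₁ x, ← hinv₁ a, h]
  refine ⟨⟨Quot.lift f hf, inv, ?_, hinv₂⟩, eT, hi, ho, ?_, ?_⟩
  · intro q
    induction q using Quot.ind with
    | _ a => exact hinv₁ a
  · intro τ q
    induction q using Quot.ind with
    | _ a =>
      cases τ with
      | inl τ =>
        show E.src (eT (Sum.inl τ)) (f a)
          = ∑ᶠ (σ : P.S) (_ : Quot.mk (pushoutRel P.o Q.i) (Sum.inl σ) = Quot.mk _ a), P.src τ σ
        rw [hsP τ a]
        exact finsum_congr fun σ => by rw [finsum_eq_if]; simp only [key]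
      | inr τ =>
        show E.src (eT (Sum.inr τ)) (f a)
          = ∑ᶠ (σ : Q.S) (_ : Quot.mk (pushoutRel P.o Q.i) (Sum.inr σ) = Quot.mk _ a), Q.src τ σ
        rw [hsQ τ a]
        exact finsum_congr fun σ => by rw [finsum_eq_if]; simp only [key]
  · intro τ q
    induction q using Quot.ind with
    | _ a =>
      cases τ with
      | inl τ =>
        show E.tgt (eT (Sum.inl τ)) (f a)
          = ∑ᶠ (σ : P.S) (_ : Quot.mk (pushoutRel P.o Q.i) (Sum.inl σ) = Quot.mk _ a), P.tgt τ σ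
        rw [htP τ a]
        exact finsum_congr fun σ => by rw [finsum_eq_if]; simp only [key]
      | inr τ =>
        show E.tgt (eT (Sum.inr τ)) (f a)
          = ∑ᶠ (σ : Q.S) (_ : Quot.mk (pushoutRel P.o Q.i) (Sum.inr σ) = Quot.mk _ a), Q.tgt τ σ
        rw [htQ τ a]
        exact finsum_congr fun σ => by rw [finsum_eq_if]; simp only [key]

variable {X K : Type} [Finite X] [Finite K]

/-- `η`-like transitionless net `X → X ⊕ K`. -/
def Tnet (X K : Type) [Finite X] [Finite K] : OpenPetri X (X ⊕ K) :=
  trNet (X ⊕ K) inferInstance Sum.inl id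

/-- `ε`-like transitionless net `X ⊕ K → X`. -/
def Unet (X K : Type) [Finite X] [Finite K] : OpenPetri (X ⊕ K) X :=
  trNet (X ⊕ K) inferInstance id Sum.inl

/-- `N` with a floating copy of `K` adjoined to the species. -/
def floatNet (N : OpenPetri X X) (K : Type) [Finite K] : OpenPetri X X :=
  ⟨N.S ⊕ K, by have := N.finS; infer_instance, Sum.inl ∘ N.i, Sum.inl ∘ N.o,
   N.T, N.finT, fun τ => Sum.elim (N.src τ) 0, fun τ => Sum.elim (N.tgt τ) 0⟩

/-- Explicit form of `(N ⊗ id_K) ; Unet`. -/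
def R1net (N : OpenPetri X X) (K : Type) [Finite K] : OpenPetri (X ⊕ K) X :=
  ⟨N.S ⊕ K, by have := N.finS; infer_instance, Sum.map N.i id, Sum.inl ∘ N.o,
   N.T, N.finT, fun τ => Sum.elim (N.src τ) 0, fun τ => Sum.elim (N.tgt τ) 0⟩

lemma Tnet_monic : (Tnet X K).Monic :=
  ⟨Sum.inl_injective, fun _ _ h => h⟩

lemma Unet_monic : (Unet X K).Monic :=
  ⟨fun _ _ h => h, Sum.inl_injective⟩

lemma tensor_id_monic (N : OpenPetri X X) (hN : N.Monic) (hK : Finite K) :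
    (N.tensor (idNet K hK)).Monic :=
  ⟨Sum.map_injective.mpr ⟨hN.1, fun _ _ h => h⟩, Sum.map_injective.mpr ⟨hN.2, fun _ _ h => h⟩⟩

lemma R1net_monic (N : OpenPetri X X) (hN : N.Monic) : (R1net N K).Monic :=
  ⟨Sum.map_injective.mpr ⟨hN.1, fun _ _ h => h⟩, Sum.inl_injective.comp hN.2⟩

lemma floatNet_monic (N : OpenPetri X X) (hN : N.Monic) : (floatNet N K).Monic :=
  ⟨Sum.inl_injective.comp hN.1, Sum.inl_injective.comp hN.2⟩

/-- Iso (a): `(N ⊗ id_K) ; U ≅ R1`. -/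
noncomputable def isoA (N : OpenPetri X X) (hK : Finite K) :
    Iso ((N.tensor (idNet K hK)).comp (Unet X K)) (R1net N K) := by
  have hfS := N.finS
  have hPS : Finite (N.tensor (idNet K hK)).S := (N.tensor (idNet K hK)).finS
  have hsrc : ∀ (g : N.T → N.S ⊕ K → ℕ) (τ : N.T) (a : (N.S ⊕ K) ⊕ (X ⊕ K)),
      g τ ((Sum.elim id (Sum.map N.o id) :
          (N.S ⊕ K) ⊕ (X ⊕ K) → N.S ⊕ K) a)
        = ∑ᶠ σ : N.S ⊕ K,
            if (Sum.elim id (Sum.map N.o id) : (N.S ⊕ K) ⊕ (X ⊕ K) → N.S ⊕ K) (Sum.inl σ)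
               = (Sum.elim id (Sum.map N.o id) : (N.S ⊕ K) ⊕ (X ⊕ K) → N.S ⊕ K) a
            then g τ σ else 0 := by
    intro g τ a
    simp only [Sum.elim_inl, id_eq]
    exact (sum_if_eq (fun σ => g τ σ)
      ((Sum.elim id (Sum.map N.o id) : (N.S ⊕ K) ⊕ (X ⊕ K) → N.S ⊕ K) a)).symm
  refine compIso _ _ _ (Sum.elim id (Sum.map N.o id)) ?_
    (fun s => Quot.mk _ (Sum.inl s)) ?_ (fun s => rfl)
    ⟨Sum.elim (Sum.elim id PEmpty.elim) PEmpty.elim, fun τ => Sum.inl (Sum.inl τ),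
      ?_, fun τ => rfl⟩
    (fun x => by cases x <;> rfl) (fun z => rfl) ?_ (fun τ => τ.elim) ?_ (fun τ => τ.elim)
  · rintro a b ⟨y, rfl, rfl⟩; rfl
  · rintro (s | y)
    · rfl
    · exact Quot.sound ⟨y, rfl, rfl⟩
  · rintro ((τ | τ) | τ)
    · rfl
    · exact τ.elim
    · exact τ.elim
  · rintro (τ | τ) a
    · have h := hsrc (fun τ => Sum.elim (N.src τ) 0) τ a
      refine Eq.trans ?_ (h.trans (finsum_congr fun σ => ?_))
      · exact rfl
      · obtain s | k := σ <;> exact if_congr Iff.rfl rfl rfl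
    · exact τ.elim
  · rintro (τ | τ) a
    · have h := hsrc (fun τ => Sum.elim (N.tgt τ) 0) τ a
      refine Eq.trans ?_ (h.trans (finsum_congr fun σ => ?_))
      · exact rfl
      · obtain s | k := σ <;> exact if_congr Iff.rfl rfl rfl
    · exact τ.elim

/-- Iso (b): `T ; R1 ≅ floatNet N K`. -/
noncomputable def isoB (N : OpenPetri X X) :
    Iso ((Tnet X K).comp (R1net N K)) (floatNet N K) := by
  have hfS := N.finS
  have hQS : Finite (R1net N K).S := (R1net N K).finS
  have hsrc : ∀ (g : (N.S ⊕ K) → ℕ) (a : (X ⊕ K) ⊕ (N.S ⊕ K)),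
      g ((Sum.elim (Sum.map N.i id) id : (X ⊕ K) ⊕ (N.S ⊕ K) → N.S ⊕ K) a)
        = ∑ᶠ σ : N.S ⊕ K,
            if (Sum.elim (Sum.map N.i id) id : (X ⊕ K) ⊕ (N.S ⊕ K) → N.S ⊕ K) (Sum.inr σ)
               = (Sum.elim (Sum.map N.i id) id : (X ⊕ K) ⊕ (N.S ⊕ K) → N.S ⊕ K) a
            then g σ else 0 := by
    intro g a
    simp only [Sum.elim_inr, id_eq]
    exact (sum_if_eq (fun σ => g σ)
      ((Sum.elim (Sum.map N.i id) id : (X ⊕ K) ⊕ (N.S ⊕ K) → N.S ⊕ K) a)).symm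
  refine compIso _ _ _ (Sum.elim (Sum.map N.i id) id) ?_
    (fun s => Quot.mk _ (Sum.inr s)) ?_ (fun s => rfl)
    ⟨Sum.elim PEmpty.elim id, Sum.inr, ?_, fun τ => rfl⟩
    (fun x => rfl) (fun z => rfl)
    (fun τ => τ.elim) ?_ (fun τ => τ.elim) ?_
  · rintro a b ⟨y, rfl, rfl⟩; rfl
  · rintro (y | s)
    · exact (Quot.sound ⟨y, rfl, rfl⟩).symm
    · rfl
  · rintro (τ | τ)
    · exact τ.elim
    · rfl
  · exact fun τ a => (hsrc (fun σ => Sum.elim (N.src τ) 0 σ) a).trans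
      (finsum_congr fun σ => if_congr Iff.rfl rfl rfl)
  · exact fun τ a => (hsrc (fun σ => Sum.elim (N.tgt τ) 0 σ) a).trans
      (finsum_congr fun σ => if_congr Iff.rfl rfl rfl)

/-- Iso (c): `T ; U ≅ floatNet (idNet X) K`. -/
noncomputable def isoC (hX : Finite X) :
    Iso ((Tnet X K).comp (Unet X K)) (floatNet (idNet X hX) K) := by
  refine compIso _ _ _ (Sum.elim id id) ?_
    (fun s => Quot.mk _ (Sum.inl s)) ?_ (fun s => rfl)
    ⟨Sum.elim PEmpty.elim PEmpty.elim, PEmpty.elim, ?_, fun τ => τ.elim⟩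
    (fun x => rfl) (fun z => rfl)
    (fun τ => τ.elim) (fun τ => τ.elim) (fun τ => τ.elim) (fun τ => τ.elim)
  · rintro a b ⟨y, rfl, rfl⟩; rfl
  · rintro (y | y)
    · rfl
    · exact Quot.sound ⟨y, rfl, rfl⟩
  · rintro (τ | τ)
    · exact τ.elim
    · exact τ.elim

/-- Iso (d): `N ; floatNet (idNet X) K ≅ floatNet N K`. -/
noncomputable def isoD (N : OpenPetri X X) (hX : Finite X) :
    Iso (N.comp (floatNet (idNet X hX) K)) (floatNet N K) := by
  have hfS := N.finS
  have hsrc : ∀ (g : N.S → ℕ) (a : N.S ⊕ (X ⊕ K)),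
      Sum.elim g 0 ((Sum.elim Sum.inl (Sum.map N.o id) : N.S ⊕ (X ⊕ K) → N.S ⊕ K) a)
        = ∑ᶠ σ : N.S,
            if (Sum.elim Sum.inl (Sum.map N.o id) : N.S ⊕ (X ⊕ K) → N.S ⊕ K) (Sum.inl σ)
               = (Sum.elim Sum.inl (Sum.map N.o id) : N.S ⊕ (X ⊕ K) → N.S ⊕ K) a
            then g σ else 0 := by
    intro g a
    simp only [Sum.elim_inl]
    exact (sum_if_inl g ((Sum.elim Sum.inl (Sum.map N.o id) : N.S ⊕ (X ⊕ K) → N.S ⊕ K) a)).symm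
  refine compIso _ _ _ (Sum.elim Sum.inl (Sum.map N.o id)) ?_
    (Sum.elim (fun s => Quot.mk _ (Sum.inl s)) (fun k => Quot.mk _ (Sum.inr (Sum.inr k))))
    ?_ ?_
    ⟨Sum.elim id PEmpty.elim, Sum.inl, ?_, fun τ => rfl⟩
    (fun x => rfl) (fun z => rfl)
    ?_ (fun τ => τ.elim) ?_ (fun τ => τ.elim)
  · rintro a b ⟨y, rfl, rfl⟩; rfl
  · rintro (s | (x | k))
    · rfl
    · exact Quot.sound ⟨x, rfl, rfl⟩
    · rfl
  · rintro (s | k) <;> rfl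
  · rintro (τ | τ)
    · rfl
    · exact τ.elim
  · exact fun τ a => (hsrc (N.src τ) a).trans
      (finsum_congr fun σ => if_congr Iff.rfl rfl rfl)
  · exact fun τ a => (hsrc (N.tgt τ) a).trans
      (finsum_congr fun σ => if_congr Iff.rfl rfl rfl)

lemma idNet_monic (hX : Finite X) : (idNet X hX).Monic :=
  ⟨fun _ _ h => h, fun _ _ h => h⟩

end Stmt19Aux

open OpenPetri in
/-- Let `M` be a cancellative commutative monoid with only trivial units and
`F` a (not necessarily monoidal) functor from `MOPetri` to `BM`: `F` sends
identities to `0`, is additive under composition of monically open Petri nets,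
and is isomorphism-invariant. Then for any endomorphism mope net `N` (equal
domain and codomain `X`) and any finite set `K`, `F (N ⊕ id_K) = F N`. -/
theorem stmt_19 (M : Type*) [AddCancelCommMonoid M]
    (hunits : ∀ x : M, (∃ y : M, x + y = 0) → x = 0)
    (F : ∀ {X Y : Type} [Finite X] [Finite Y], OpenPetri X Y → M)
    (hid : ∀ (S : Type) (hS : Finite S), F (idNet S hS) = 0)
    (hcomp : ∀ {X Y Z : Type} [Finite X] [Finite Y] [Finite Z]
      (P : OpenPetri X Y) (Q : OpenPetri Y Z), P.Monic → Q.Monic →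
      F (P.comp Q) = F P + F Q)
    (hiso : ∀ {X Y : Type} [Finite X] [Finite Y] (P Q : OpenPetri X Y),
      Nonempty (OpenPetri.Iso P Q) → F P = F Q) :
    ∀ {X : Type} [Finite X] (N : OpenPetri X X), N.Monic →
      ∀ (K : Type) (hK : Finite K), F (N.tensor (idNet K hK)) = F N := by
  intro X instX N hN K hK
  haveI := hK
  haveI : Finite (X ⊕ K) := inferInstance
  have hT := Stmt19Aux.Tnet_monic (X := X) (K := K)
  have hU := Stmt19Aux.Unet_monic (X := X) (K := K)
  have e1 : F ((N.tensor (idNet K hK)).comp (Stmt19Aux.Unet X K))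
      = F (N.tensor (idNet K hK)) + F (Stmt19Aux.Unet X K) :=
    hcomp _ _ (Stmt19Aux.tensor_id_monic N hN hK) hU
  have e2 : F ((N.tensor (idNet K hK)).comp (Stmt19Aux.Unet X K))
      = F (Stmt19Aux.R1net N K) := hiso _ _ ⟨Stmt19Aux.isoA N hK⟩
  have e3 : F ((Stmt19Aux.Tnet X K).comp (Stmt19Aux.R1net N K))
      = F (Stmt19Aux.Tnet X K) + F (Stmt19Aux.R1net N K) :=
    hcomp _ _ hT (Stmt19Aux.R1net_monic N hN)
  have e4 : F ((Stmt19Aux.Tnet X K).comp (Stmt19Aux.R1net N K))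
      = F (Stmt19Aux.floatNet N K) := hiso _ _ ⟨Stmt19Aux.isoB N⟩
  have e5 : F ((Stmt19Aux.Tnet X K).comp (Stmt19Aux.Unet X K))
      = F (Stmt19Aux.Tnet X K) + F (Stmt19Aux.Unet X K) := hcomp _ _ hT hU
  have e6 : F ((Stmt19Aux.Tnet X K).comp (Stmt19Aux.Unet X K))
      = F (Stmt19Aux.floatNet (idNet X instX) K) := hiso _ _ ⟨Stmt19Aux.isoC instX⟩
  have e7 : F (N.comp (Stmt19Aux.floatNet (idNet X instX) K))
      = F N + F (Stmt19Aux.floatNet (idNet X instX) K) :=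
    hcomp _ _ hN (Stmt19Aux.floatNet_monic _ (Stmt19Aux.idNet_monic instX))
  have e8 : F (N.comp (Stmt19Aux.floatNet (idNet X instX) K))
      = F (Stmt19Aux.floatNet N K) := hiso _ _ ⟨Stmt19Aux.isoD N instX⟩
  have h1 : F (Stmt19Aux.floatNet N K)
      = F (Stmt19Aux.Tnet X K) + (F (N.tensor (idNet K hK)) + F (Stmt19Aux.Unet X K)) := by
    rw [← e4, e3, ← e2, e1]
  have h2 : F (Stmt19Aux.floatNet N K)
      = F N + (F (Stmt19Aux.Tnet X K) + F (Stmt19Aux.Unet X K)) := by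
    rw [← e8, e7, ← e6, e5]
  have hc : F (Stmt19Aux.Tnet X K) + F (N.tensor (idNet K hK)) + F (Stmt19Aux.Unet X K)
      = F (Stmt19Aux.Tnet X K) + F N + F (Stmt19Aux.Unet X K) := by
    calc F (Stmt19Aux.Tnet X K) + F (N.tensor (idNet K hK)) + F (Stmt19Aux.Unet X K)
        = F (Stmt19Aux.Tnet X K) + (F (N.tensor (idNet K hK)) + F (Stmt19Aux.Unet X K)) :=
          add_assoc _ _ _
      _ = F (Stmt19Aux.floatNet N K) := h1.symm
      _ = F N + (F (Stmt19Aux.Tnet X K) + F (Stmt19Aux.Unet X K)) := h2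
      _ = F (Stmt19Aux.Tnet X K) + F N + F (Stmt19Aux.Unet X K) := by
          rw [add_left_comm, ← add_assoc]
  exact add_left_cancel (add_right_cancel hc)
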